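/- Every automorphism f of the algebra F_n^1 (n ≥ 3) has the form f(e_1) = a_1 e_1 + a_n e_n, f(e_2) = Σ_{k=2}^n b_k e_k, and f(e_i) = a_1^{i-2} Σ_{k=i}^n b_{k-i+2} e_k for 3 ≤ i ≤ n, with a_1 b_2 ≠ 0. -/
import Mathlib


/-- The bracket of the filiform Leibniz algebra `F_n^1` on `Fin n → ℂ`
(0-indexed: `[e i, e 0] = e (i+1)` for `1 ≤ i ≤ n-2`, other basis products zero). -/
def f1Br (n : ℕ) (x y : Fin n → ℂ) : Fin n → ℂ :=
  fun k => if _ : 2 ≤ (k : ℕ) then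
    y ⟨0, k.pos⟩ * x ⟨(k : ℕ) - 1, Nat.lt_of_le_of_lt (Nat.sub_le _ _) k.isLt⟩
  else 0

/-- Basis vectors: `f1E n i = e_{i+1}` (0-indexed). -/
def f1E (n : ℕ) (i : Fin n) : Fin n → ℂ := Pi.single i 1

lemma br_apply' {n : ℕ} (x y : Fin n → ℂ) (m : ℕ) (hm : m < n) (hk : 2 ≤ m) :
    f1Br n x y ⟨m, hm⟩ = y ⟨0, by omega⟩ * x ⟨m-1, by omega⟩ := by
  simp [f1Br, hk]

lemma br_apply_lt' {n : ℕ} (x y : Fin n → ℂ) (m : ℕ) (hm : m < n) (hk : ¬ 2 ≤ m) :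
    f1Br n x y ⟨m, hm⟩ = 0 := by simp [f1Br, hk]

lemma e_apply {n : ℕ} (i k : Fin n) : f1E n i k = if k = i then 1 else 0 := Pi.single_apply ..

lemma e_apply' {n : ℕ} (i m : ℕ) (hi : i < n) (hm : m < n) :
    f1E n ⟨i, hi⟩ ⟨m, hm⟩ = if m = i then 1 else 0 := by
  rw [e_apply]; simp [Fin.mk.injEq]

lemma br_e {n : ℕ} (hn : 0 < n) (i : ℕ) (hi : 1 ≤ i) (hi2 : i + 1 < n) :
    f1Br n (f1E n ⟨i, by omega⟩) (f1E n ⟨0, hn⟩) = f1E n ⟨i+1, by omega⟩ := by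
  funext k
  rcases k with ⟨m, hm⟩
  by_cases hk : 2 ≤ m
  · rw [br_apply' _ _ _ _ hk, e_apply' _ _ _ _, e_apply' _ _ _ _, e_apply' _ _ _ _]
    split_ifs <;> simp_all <;> omega
  · rw [br_apply_lt' _ _ _ _ hk, e_apply' _ _ _ _, if_neg (by omega)]

/-- Every automorphism `f` of `F_n^1` satisfies `f(e_1) = a₁e_1 + aₙeₙ`,
`f(e_2) = ∑_{k=2}^n b_k e_k`, `f(e_i) = a₁^{i-2} ∑_{k=i}^n b_{k-i+2} e_k`
(1-based indices), with `a₁ b₂ ≠ 0`. -/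
theorem f1_automorphisms (n : ℕ) (hn : 3 ≤ n)
    (f : (Fin n → ℂ) ≃ₗ[ℂ] (Fin n → ℂ))
    (hf : ∀ x y, f (f1Br n x y) = f1Br n (f x) (f y)) :
    ∃ a₁ aₙ : ℂ, ∃ b : ℕ → ℂ, a₁ * b 2 ≠ 0 ∧
      f (f1E n ⟨0, by omega⟩) =
        a₁ • f1E n ⟨0, by omega⟩ + aₙ • f1E n ⟨n - 1, by omega⟩ ∧
      f (f1E n ⟨1, by omega⟩) =
        ∑ k ∈ Finset.univ.filter (fun k : Fin n => 1 ≤ (k : ℕ)),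
          b ((k : ℕ) + 1) • f1E n k ∧
      ∀ i : Fin n, 2 ≤ (i : ℕ) →
        f (f1E n i) = a₁ ^ ((i : ℕ) - 1) •
          ∑ k ∈ Finset.univ.filter (fun k : Fin n => (i : ℕ) ≤ (k : ℕ)),
            b ((k : ℕ) - (i : ℕ) + 2) • f1E n k := by
  have hn0 : (0:ℕ) < n := by omega
  set v : Fin n → ℂ := f (f1E n ⟨0, hn0⟩) with hv
  set w : Fin n → ℂ := f (f1E n ⟨1, by omega⟩) with hw
  set V : ℕ → ℂ := fun m => if h : m < n then v ⟨m, h⟩ else 0 with hV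
  set W : ℕ → ℂ := fun m => if h : m < n then w ⟨m, h⟩ else 0 with hW
  have hVap : ∀ m (hm : m < n), v ⟨m, hm⟩ = V m := by
    intro m hm; simp [hV, hm]
  have hWap : ∀ m (hm : m < n), w ⟨m, hm⟩ = W m := by
    intro m hm; simp [hW, hm]
  set a₁ : ℂ := V 0 with ha₁
  have hfe : ∀ j : Fin n, f (f1E n j) ≠ 0 := by
    intro j h
    have h1 : f1E n j = 0 := by
      apply f.injective; simpa using h
    have := congrFun h1 j
    rw [e_apply] at this; simp at this
  -- [v,v] = 0
  have hvv : f1Br n v v = 0 := by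
    rw [← hf]
    have : f1Br n (f1E n ⟨0, hn0⟩) (f1E n ⟨0, hn0⟩) = 0 := by
      funext k
      rcases k with ⟨m, hm⟩
      by_cases hk : 2 ≤ m
      · rw [br_apply' _ _ _ _ hk, e_apply' 0 (m-1) (by omega) (by omega),
          if_neg (by omega), mul_zero]; rfl
      · rw [br_apply_lt' _ _ _ _ hk]; rfl
    rw [this, map_zero]
  have hVzero : ∀ j : ℕ, 1 ≤ j → j ≤ n - 2 → a₁ * V j = 0 := by
    intro j hj1 hj2
    have := congrFun hvv ⟨j+1, by omega⟩
    rw [br_apply' _ _ _ _ (by omega)] at this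
    rw [hVap, hVap] at this
    simpa using this
  -- f e_2 = [w, v]
  have hfe2 : f (f1E n ⟨2, by omega⟩) = f1Br n w v := by
    rw [← hf]
    congr 1
    exact (br_e hn0 1 le_rfl (by omega)).symm
  -- a₁ ≠ 0
  have ha1 : a₁ ≠ 0 := by
    intro h
    apply hfe ⟨2, by omega⟩
    rw [hfe2]
    funext k
    rcases k with ⟨m, hm⟩
    by_cases hk : 2 ≤ m
    · rw [br_apply' _ _ _ _ hk, hVap, ← ha₁, h, zero_mul]; rfl
    · rw [br_apply_lt' _ _ _ _ hk]; rfl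
  have hV0 : ∀ j : ℕ, 1 ≤ j → j ≤ n - 2 → V j = 0 := by
    intro j hj1 hj2
    exact (mul_eq_zero.mp (hVzero j hj1 hj2)).resolve_left ha1
  -- components of f e_2
  have hfe2c : ∀ m (hm : m < n), 2 ≤ m → f (f1E n ⟨2, by omega⟩) ⟨m, hm⟩ = a₁ * W (m - 1) := by
    intro m hm hk
    rw [hfe2, br_apply' _ _ _ _ hk, hVap, hWap]
  -- w 0 = 0
  have hW0 : W 0 = 0 := by
    have hww : f1Br n w w = 0 := by
      rw [← hf]
      have : f1Br n (f1E n ⟨1, by omega⟩) (f1E n ⟨1, by omega⟩) = 0 := by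
        funext k
        rcases k with ⟨m, hm⟩
        by_cases hk : 2 ≤ m
        · rw [br_apply' _ _ _ _ hk, e_apply' 1 0 (by omega) (by omega),
            if_neg (by omega), zero_mul]; rfl
        · rw [br_apply_lt' _ _ _ _ hk]; rfl
      rw [this, map_zero]
    have : ∃ j : ℕ, 1 ≤ j ∧ j ≤ n - 2 ∧ W j ≠ 0 := by
      by_contra hc
      push_neg at hc
      apply hfe ⟨2, by omega⟩
      funext k
      rcases k with ⟨m, hm⟩
      by_cases hk : 2 ≤ m
      · rw [hfe2c m hm hk, hc _ (by omega) (by omega), mul_zero]; rfl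
      · rw [hfe2, br_apply_lt' _ _ _ _ hk]; rfl
    obtain ⟨j, hj1, hj2, hj3⟩ := this
    have := congrFun hww ⟨j+1, by omega⟩
    rw [br_apply' _ _ _ _ (by omega), hWap, hWap] at this
    simp only [Pi.zero_apply] at this
    exact (mul_eq_zero.mp this).resolve_right hj3
  -- main induction
  have key : ∀ i, 1 ≤ i → ∀ (h : i < n), ∀ m (hm : m < n),
      f (f1E n ⟨i, h⟩) ⟨m, hm⟩ = if i ≤ m then a₁ ^ (i-1) * W (m - i + 1) else 0 := by
    intro i hi
    induction i, hi using Nat.le_induction with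
    | base =>
      intro h m hm
      have h1 : f (f1E n ⟨1, h⟩) ⟨m, hm⟩ = W m := by
        show w ⟨m, hm⟩ = W m
        exact hWap m hm
      rw [h1]
      by_cases hk : 1 ≤ m
      · rw [if_pos hk]; simp [Nat.sub_add_cancel hk]
      · rw [if_neg hk]
        have : m = 0 := by omega
        rw [this, hW0]
    | succ p hp ih =>
      intro h m hm
      have hfe' : f (f1E n ⟨p+1, h⟩) = f1Br n (f (f1E n ⟨p, by omega⟩)) v := by
        rw [← hf]
        congr 1
        exact (br_e hn0 p hp h).symm
      rw [hfe']
      by_cases hk : 2 ≤ m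
      · rw [br_apply' _ _ _ _ hk, hVap, ← ha₁]
        rw [ih (by omega) (m-1) (by omega)]
        by_cases hmk : p + 1 ≤ m
        · rw [if_pos (by omega), if_pos hmk]
          have e1 : m - 1 - p + 1 = m - (p+1) + 1 := by omega
          have e2 : p + 1 - 1 = (p - 1) + 1 := by omega
          rw [e1, e2, pow_succ]
          ring
        · rw [if_neg (by omega), if_neg hmk, mul_zero]
      · rw [br_apply_lt' _ _ _ _ hk, if_neg (by omega)]
  -- W 1 ≠ 0
  have hW1 : W 1 ≠ 0 := by
    intro h
    apply hfe ⟨n-1, by omega⟩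
    funext k
    rcases k with ⟨m, hm⟩
    rw [key (n-1) (by omega) (by omega) m hm]
    by_cases hk : n - 1 ≤ m
    · rw [if_pos hk, show m - (n-1) + 1 = 1 by omega, h, mul_zero]; rfl
    · rw [if_neg hk]; rfl
  refine ⟨a₁, V (n-1), fun m => W (m-1), mul_ne_zero ha1 hW1, ?_, ?_, ?_⟩
  · -- f e_0
    funext k
    rcases k with ⟨m, hm⟩
    have : v ⟨m, hm⟩ = V m := hVap m hm
    show v ⟨m, hm⟩ = _
    rw [this]
    simp only [Pi.add_apply, Pi.smul_apply, e_apply', smul_eq_mul]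
    by_cases hm0 : m = 0
    · subst hm0
      rw [if_pos rfl, if_neg (by omega)]
      simp [ha₁]
    · by_cases hmn : m = n - 1
      · subst hmn
        rw [if_neg hm0, if_pos rfl]
        simp
      · rw [if_neg hm0, if_neg hmn, hV0 m (by omega) (by omega)]
        simp
  · -- f e_1
    funext k
    rcases k with ⟨m, hm⟩
    show w ⟨m, hm⟩ = _
    rw [hWap m hm]
    simp only [Finset.sum_apply, Pi.smul_apply, smul_eq_mul, e_apply, mul_ite, mul_one,
      mul_zero, Finset.sum_ite_eq, Finset.mem_filter, Finset.mem_univ, true_and, Fin.val_mk]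
    by_cases hk : 1 ≤ m
    · rw [if_pos hk]
      simp
    · rw [if_neg hk, show m = 0 from by omega, hW0]
  · -- f e_i, i ≥ 2
    intro i hi2
    funext k
    rcases k with ⟨m, hm⟩
    have hL : f (f1E n i) ⟨m, hm⟩ =
        if (i:ℕ) ≤ m then a₁ ^ ((i:ℕ)-1) * W (m - (i:ℕ) + 1) else 0 := by
      rw [← key (i:ℕ) (by omega) i.isLt m hm]
    rw [hL]
    simp only [Pi.smul_apply, smul_eq_mul, Finset.sum_apply, e_apply, mul_ite, mul_one,
      mul_zero, Finset.sum_ite_eq, Finset.mem_filter, Finset.mem_univ, true_and, Fin.val_mk]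
    split_ifs with h <;> rfl
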